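/- There does not exist any perfect 2-deletion binary code of length 7; that is, no subset C ⊆ 𝔹^7 has pairwise disjoint 2-deletion spheres whose union equals 𝔹^5. -/

import Mathlib

open Filter Finset

/-- The number of runs of a binary sequence (maximal blocks of equal consecutive symbols). -/
def runsCount (x : List Bool) : ℕ := (x.destutter (· ≠ ·)).length

/-- The deletion sphere `dS^t(x)`: all sequences obtained from `x` by deleting `t` symbols,
i.e. the sublists of `x` of length `x.length - t`. -/
def delSphere (t : ℕ) (x : List Bool) : Set (List Bool) :=
  {y | y.Sublist x ∧ y.length = x.length - t}

/-- `dS^t(X)` for a set `X` of sequences. -/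
def delSphereSet (t : ℕ) (X : Set (List Bool)) : Set (List Bool) :=
  ⋃ x ∈ X, delSphere t x

/-- A `t`-deletion code of length `n`: a set of binary sequences of length `n`
with pairwise disjoint deletion spheres. -/
def IsDeletionCode (t n : ℕ) (C : Set (List Bool)) : Prop :=
  (∀ c ∈ C, c.length = n) ∧
  ∀ c ∈ C, ∀ d ∈ C, c ≠ d → delSphere t c ∩ delSphere t d = ∅

/-- A perfect `t`-deletion code of length `n`: the deletion spheres of codewords
cover all of `𝔹^{n-t}`. -/
def IsPerfectDeletionCode (t n : ℕ) (C : Set (List Bool)) : Prop :=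
  IsDeletionCode t n C ∧ delSphereSet t C = {y : List Bool | y.length = n - t}

/-- `M^t(n)`: the maximum cardinality of a `t`-deletion code of length `n`. -/
noncomputable def maxDelCodeSize (t n : ℕ) : ℕ :=
  sSup {m : ℕ | ∃ C : Set (List Bool), IsDeletionCode t n C ∧ C.ncard = m}

/-! ### Auxiliary machinery for the search -/

/-- All binary words of length `n`. -/
def allW : ℕ → List (List Bool)
  | 0 => [[]]
  | n+1 => (allW n).flatMap fun l => [false :: l, true :: l]

lemma mem_allW : ∀ (n : ℕ) (x : List Bool), x ∈ allW n ↔ x.length = n := by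
  intro n
  induction n with
  | zero => intro x; simp [allW, List.length_eq_zero_iff]
  | succ n ih =>
    intro x
    simp only [allW, List.mem_flatMap, List.mem_cons, List.mem_singleton]
    constructor
    · rintro ⟨l, hl, rfl | (rfl | h)⟩
      · simp [(ih l).mp hl]
      · simp [(ih l).mp hl]
      · simp at h
    · intro hx
      match x with
      | [] => simp at hx
      | b :: l =>
        refine ⟨l, (ih l).mpr (by simpa using hx), ?_⟩
        cases b <;> simp

/-- The deletion sphere of `w` (for two deletions from a length-7 word), as a `Finset`. -/
def sph (w : List Bool) : Finset (List Bool) :=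
  (w.sublists.filter fun y => y.length == 5).toFinset

lemma mem_sph {y w : List Bool} : y ∈ sph w ↔ y.Sublist w ∧ y.length = 5 := by
  simp [sph, List.mem_filter, List.mem_sublists]

lemma coe_sph {w : List Bool} (h : w.length = 7) :
    (↑(sph w) : Set (List Bool)) = delSphere 2 w := by
  ext y; simp [mem_sph, delSphere, h]

/-- Encode a binary word as a natural number. -/
def enc : List Bool → ℕ
  | [] => 0
  | b :: l => (cond b 1 0) + 2 * enc l

lemma enc_lt : ∀ l : List Bool, enc l < 2 ^ l.length := by
  intro l
  induction l with
  | nil => simp [enc]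
  | cons b l ih =>
    have : (2 : ℕ) ^ (b :: l).length = 2 * 2 ^ l.length := by
      simp [pow_succ]; ring
    rw [this]
    cases b <;> simp [enc] <;> omega

lemma enc_inj : ∀ (a b : List Bool), a.length = b.length → enc a = enc b → a = b := by
  intro a
  induction a with
  | nil =>
    intro b hl _
    match b with
    | [] => rfl
    | y :: ys => simp at hl
  | cons x xs ih =>
    intro b hl he
    match b with
    | [] => simp at hl
    | y :: ys =>
      have hxy : x = y ∧ enc xs = enc ys := by
        cases x <;> cases y <;> simp [enc] at he ⊢ <;> omega
      have hlen : xs.length = ys.length := by simpa using hl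
      rw [hxy.1, ih ys hlen hxy.2]

instance : Std.Commutative (α := ℕ) (· ||| ·) := ⟨Nat.lor_comm⟩
instance : Std.Associative (α := ℕ) (· ||| ·) := ⟨Nat.lor_assoc⟩

/-- The bitmask of a finite set of words. -/
def msk (S : Finset (List Bool)) : ℕ := S.fold (· ||| ·) 0 (fun y => 2 ^ enc y)

lemma msk_empty : msk ∅ = 0 := rfl

lemma msk_insert {a : List Bool} {S : Finset (List Bool)} (h : a ∉ S) :
    msk (insert a S) = 2 ^ enc a ||| msk S := by
  simp only [msk]; exact Finset.fold_insert h

lemma testBit_msk {S : Finset (List Bool)} {k : ℕ} :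
    (msk S).testBit k = true ↔ ∃ y ∈ S, enc y = k := by
  induction S using Finset.induction_on with
  | empty => simp [msk_empty]
  | insert _ _ h ih =>
    rw [msk_insert h]
    simp only [Nat.testBit_or, Bool.or_eq_true, Nat.testBit_two_pow, decide_eq_true_eq,
      Finset.mem_insert, ih]
    constructor
    · rintro (rfl | ⟨y, hy, rfl⟩)
      · exact ⟨_, Or.inl rfl, rfl⟩
      · exact ⟨y, Or.inr hy, rfl⟩
    · rintro ⟨y, rfl | hy, rfl⟩
      · exact Or.inl rfl
      · exact Or.inr ⟨y, hy, rfl⟩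

lemma msk_land_of_subset {A B : Finset (List Bool)} (h : A ⊆ B) :
    msk A &&& msk B = msk A := by
  apply Nat.eq_of_testBit_eq
  intro k
  rw [Nat.testBit_and]
  cases hA : (msk A).testBit k with
  | false => simp
  | true =>
    obtain ⟨y, hy, rfl⟩ := testBit_msk.mp hA
    have : (msk B).testBit (enc y) = true := testBit_msk.mpr ⟨y, h hy, rfl⟩
    simp [this]

lemma msk_sdiff {T S : Finset (List Bool)} (h5 : ∀ y ∈ T, y.length = 5) (hST : S ⊆ T) :
    msk (T \ S) = msk T ^^^ msk S := by
  apply Nat.eq_of_testBit_eq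
  intro k
  rw [Nat.testBit_xor]
  by_cases hT : ∃ y ∈ T, enc y = k
  · obtain ⟨y, hyT, rfl⟩ := hT
    have hbT : (msk T).testBit (enc y) = true := testBit_msk.mpr ⟨y, hyT, rfl⟩
    by_cases hyS : y ∈ S
    · have hbS : (msk S).testBit (enc y) = true := testBit_msk.mpr ⟨y, hyS, rfl⟩
      have hD : (msk (T \ S)).testBit (enc y) = false := by
        rw [← Bool.not_eq_true]
        intro h
        obtain ⟨z, hz, hzk⟩ := testBit_msk.mp h
        rw [Finset.mem_sdiff] at hz
        have : z = y := enc_inj z y ((h5 z hz.1).trans (h5 y hyT).symm) hzk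
        exact hz.2 (this ▸ hyS)
      rw [hD, hbT, hbS]; rfl
    · have hbS : (msk S).testBit (enc y) = false := by
        rw [← Bool.not_eq_true]
        intro h
        obtain ⟨z, hz, hzk⟩ := testBit_msk.mp h
        have : z = y := enc_inj z y ((h5 z (hST hz)).trans (h5 y hyT).symm) hzk
        exact hyS (this ▸ hz)
      have hD : (msk (T \ S)).testBit (enc y) = true :=
        testBit_msk.mpr ⟨y, Finset.mem_sdiff.mpr ⟨hyT, hyS⟩, rfl⟩
      rw [hD, hbT, hbS]; rfl
  · push_neg at hT
    have hbT : (msk T).testBit k = false := by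
      rw [← Bool.not_eq_true]; intro h
      obtain ⟨z, hz, hzk⟩ := testBit_msk.mp h; exact hT z hz hzk
    have hbS : (msk S).testBit k = false := by
      rw [← Bool.not_eq_true]; intro h
      obtain ⟨z, hz, hzk⟩ := testBit_msk.mp h; exact hT z (hST hz) hzk
    have hD : (msk (T \ S)).testBit k = false := by
      rw [← Bool.not_eq_true]; intro h
      obtain ⟨z, hz, hzk⟩ := testBit_msk.mp h
      exact hT z (Finset.mem_sdiff.mp hz).1 hzk
    rw [hD, hbT, hbS]; rfl

/-- The bitmasks of the deletion spheres of all length-7 words. -/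
def pairsM : List ℕ := (allW 7).map fun w => msk (sph w)

/-- A fueled exact-cover search: can the set of words encoded by the mask `t` be partitioned
into deletion spheres of length-7 words? (Complete: returns `true` if a partition exists.) -/
def searchM : ℕ → ℕ → Bool
  | 0, t => t == 0
  | n+1, t =>
    match (List.range 32).find? (fun k => t.testBit k) with
    | none => true
    | some k => pairsM.any fun p => p.testBit k && (p &&& t == p) && searchM n (t ^^^ p)

lemma searchM_complete : ∀ (n : ℕ) (T : Finset (List Bool)) (C : Set (List Bool)),
    (∀ y ∈ T, y.length = 5) →
    (∀ c ∈ C, c.length = 7) →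
    (∀ c ∈ C, ∀ d ∈ C, c ≠ d → delSphere 2 c ∩ delSphere 2 d = ∅) →
    (⋃ c ∈ C, delSphere 2 c) = ↑T →
    T.card ≤ n →
    searchM n (msk T) = true := by
  intro n
  induction n with
  | zero =>
    intro T C _ _ _ _ hcard
    have : T = ∅ := Finset.card_eq_zero.mp (Nat.le_zero.mp hcard)
    subst this
    simp [searchM, msk_empty]
  | succ n ih =>
    intro T C h5 hlen hdisj hcov hcard
    rcases T.eq_empty_or_nonempty with rfl | ⟨y0, hy0⟩
    · have hm : msk (∅ : Finset (List Bool)) = 0 := msk_empty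
      rw [searchM, hm]
      have : (List.range 32).find? (fun k => Nat.testBit 0 k) = none := by
        rw [List.find?_eq_none]; intro k _; simp
      rw [this]
    · -- find the first uncovered word
      have hbit0 : (msk T).testBit (enc y0) = true := testBit_msk.mpr ⟨y0, hy0, rfl⟩
      have h32 : enc y0 < 32 := by
        have := enc_lt y0; rw [h5 y0 hy0] at this; simpa using this
      have hsome : (((List.range 32).find? (fun k => (msk T).testBit k))).isSome := by
        rw [List.find?_isSome]
        exact ⟨enc y0, List.mem_range.mpr h32, hbit0⟩
      obtain ⟨k, hfind⟩ := Option.isSome_iff_exists.mp hsome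
      have hk : (msk T).testBit k = true := List.find?_some hfind
      obtain ⟨y, hyT, hyk⟩ := testBit_msk.mp hk
      -- find the codeword covering it
      have hyU : y ∈ ⋃ c ∈ C, delSphere 2 c := by rw [hcov]; exact hyT
      rw [Set.mem_iUnion₂] at hyU
      obtain ⟨c, hcC, hyc⟩ := hyU
      have hc7 : c.length = 7 := hlen c hcC
      have hcoe : (↑(sph c) : Set (List Bool)) = delSphere 2 c := coe_sph hc7
      have hysph : y ∈ sph c := by rw [← Finset.mem_coe, hcoe]; exact hyc
      have hsub : sph c ⊆ T := by
        rw [← Finset.coe_subset, hcoe, ← hcov]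
        exact Set.subset_iUnion₂ (s := fun c _ => delSphere 2 c) c hcC
      have hpmem : msk (sph c) ∈ pairsM :=
        List.mem_map.mpr ⟨c, (mem_allW 7 c).mpr hc7, rfl⟩
      have hbitp : (msk (sph c)).testBit k = true := testBit_msk.mpr ⟨y, hysph, hyk⟩
      have hland : msk (sph c) &&& msk T = msk (sph c) := msk_land_of_subset hsub
      have hxor : msk T ^^^ msk (sph c) = msk (T \ sph c) := by
        rw [msk_sdiff h5 hsub]
      -- recurse on the rest
      have hcard' : (T \ sph c).card ≤ n := by
        have hss : T \ sph c ⊂ T := by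
          refine Finset.ssubset_iff_of_subset (Finset.sdiff_subset) |>.mpr ?_
          exact ⟨y, hyT, by simp [Finset.mem_sdiff, hyT, hysph]⟩
        have := Finset.card_lt_card hss
        omega
      have h5' : ∀ z ∈ T \ sph c, z.length = 5 := fun z hz => h5 z (Finset.sdiff_subset hz)
      have hcov' : (⋃ d ∈ (C \ {c} : Set (List Bool)), delSphere 2 d) = ↑(T \ sph c) := by
        rw [Finset.coe_sdiff, hcoe]
        ext z
        simp only [Set.mem_iUnion₂, Set.mem_diff, Set.mem_singleton_iff]
        constructor
        · rintro ⟨d, ⟨hdC, hdc⟩, hz⟩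
          refine ⟨by rw [← hcov]; exact Set.mem_iUnion₂.mpr ⟨d, hdC, hz⟩, ?_⟩
          intro hzc
          have := hdisj d hdC c hcC hdc
          have : z ∈ delSphere 2 d ∩ delSphere 2 c := ⟨hz, hzc⟩
          rw [hdisj d hdC c hcC hdc] at this
          exact this
        · rintro ⟨hzT, hzc⟩
          rw [← hcov] at hzT
          obtain ⟨d, hdC, hz⟩ := Set.mem_iUnion₂.mp hzT
          refine ⟨d, ⟨hdC, ?_⟩, hz⟩
          rintro rfl
          exact hzc hz
      have hlen' : ∀ d ∈ (C \ {c} : Set (List Bool)), d.length = 7 := fun d hd => hlen d hd.1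
      have hdisj' : ∀ a ∈ (C \ {c} : Set (List Bool)), ∀ b ∈ (C \ {c} : Set (List Bool)),
          a ≠ b → delSphere 2 a ∩ delSphere 2 b = ∅ :=
        fun a ha b hb hab => hdisj a ha.1 b hb.1 hab
      have hrec : searchM n (msk (T \ sph c)) = true :=
        ih (T \ sph c) (C \ {c}) h5' hlen' hdisj' hcov' hcard'
      -- assemble
      rw [searchM, hfind, List.any_eq_true]
      refine ⟨msk (sph c), hpmem, ?_⟩
      rw [hbitp, hland, hxor, hrec]
      simp

set_option maxRecDepth 100000 in
lemma searchM_result : searchM 32 (msk ((allW 5).toFinset)) = false := by decide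

/-- There is no perfect 2-deletion binary code of length 7. -/
theorem no_perfect_two_deletion_code_length_seven :
    ¬ ∃ C : Set (List Bool), IsPerfectDeletionCode 2 7 C := by
  rintro ⟨C, ⟨⟨hlen, hdisj⟩, hcov⟩⟩
  have hT : (⋃ c ∈ C, delSphere 2 c) = ↑((allW 5).toFinset) := by
    rw [show (⋃ c ∈ C, delSphere 2 c) = delSphereSet 2 C from rfl, hcov]
    ext y
    simp [mem_allW]
  have h5 : ∀ y ∈ (allW 5).toFinset, y.length = 5 :=
    fun y hy => (mem_allW 5 y).mp (List.mem_toFinset.mp hy)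
  have hc : ((allW 5).toFinset).card ≤ 32 := by
    refine le_trans (List.toFinset_card_le _) ?_
    have : (allW 5).length = 32 := by decide
    omega
  have htrue := searchM_complete 32 ((allW 5).toFinset) C h5 hlen hdisj hT hc
  rw [searchM_result] at htrue
  exact Bool.false_ne_true htrue
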